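/- arXiv:1705.00729 — 6 statements merged into one kernel-verified Lean document; each statement's English description precedes it below -/
import Mathlib

section
/- Let p(x) = Σ_{i=0}^n p_i x^i be a polynomial of degree n ≥ 1 over ℂ with p_n ≠ 0, let r_1 = max_{1≤j≤n} |x_j| be its largest root radius (the maximum modulus of its complex roots), and set r_1^+ = 2·max_{1≤i≤n} |p_{n−i}/p_n|^{1/i}. Then r_1^+/(2n) ≤ r_1 ≤ r_1^+. -/
open Polynomial

lemma abs_prod_le_pow (r : ℝ) (hr : 0 ≤ r) (t : Multiset ℂ) (h : ∀ x ∈ t, ‖x‖ ≤ r) :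
    ‖t.prod‖ ≤ r ^ Multiset.card t := by
  induction t using Multiset.induction with
  | empty => simp
  | cons a t ih =>
    rw [Multiset.prod_cons, norm_mul, Multiset.card_cons, pow_succ']
    exact mul_le_mul (h a (Multiset.mem_cons_self a t))
      (ih fun x hx => h x (Multiset.mem_cons_of_mem hx))
      (norm_nonneg _) hr

lemma abs_esymm_le (s : Multiset ℂ) (i : ℕ) (r : ℝ) (hr : 0 ≤ r)
    (h : ∀ x ∈ s, ‖x‖ ≤ r) :
    ‖s.esymm i‖ ≤ ((Multiset.card s).choose i : ℝ) * r ^ i := by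
  unfold Multiset.esymm
  calc ‖((s.powersetCard i).map Multiset.prod).sum‖
      ≤ ((((s.powersetCard i).map Multiset.prod)).map (fun x => ‖x‖)).sum :=
        norm_multiset_sum_le _
    _ ≤ (((s.powersetCard i).map Multiset.prod).map (fun x => ‖x‖)).card • (r ^ i) := by
        apply Multiset.sum_le_card_nsmul
        intro x hx
        simp only [Multiset.mem_map] at hx
        obtain ⟨y, hy, rfl⟩ := hx
        obtain ⟨t, ht, rfl⟩ := hy
        obtain ⟨hts, htc⟩ := Multiset.mem_powersetCard.mp ht
        calc ‖t.prod‖ ≤ r ^ Multiset.card t :=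
              abs_prod_le_pow r hr t fun a ha => h a (Multiset.mem_of_le hts ha)
          _ = r ^ i := by rw [htc]
    _ = ((Multiset.card s).choose i : ℝ) * r ^ i := by
        rw [Multiset.card_map, Multiset.card_map, Multiset.card_powersetCard, nsmul_eq_mul]

lemma geo_sum_lt (n : ℕ) (hn : 1 ≤ n) :
    (Finset.range n).sum (fun k => ((1:ℝ)/2)^(n-k)) < 1 := by
  have key : ∀ m : ℕ, (Finset.range m).sum (fun k => ((1:ℝ)/2)^(m-k)) = 1 - (1/2)^m := by
    intro m
    induction m with
    | zero => simp
    | succ m ih =>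
      rw [Finset.sum_range_succ]
      have : ∀ k ∈ Finset.range m, ((1:ℝ)/2)^(m+1-k) = (1/2) * (1/2)^(m-k) := by
        intro k hk
        have hk' : k ≤ m := Nat.le_of_lt (Finset.mem_range.mp hk)
        rw [Nat.succ_sub hk', pow_succ, mul_comm]
      rw [Finset.sum_congr rfl this, ← Finset.mul_sum, ih]
      have h3 : m + 1 - m = 1 := by omega
      rw [h3]
      ring
  rw [key]
  have : (0:ℝ) < (1/2)^n := by positivity
  linarith

/-- For a degree-`n ≥ 1` polynomial `p` over `ℂ` with `p_n ≠ 0`,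
if `r1` is the largest modulus of a root of `p` and
`r1plus = 2 · max_{1 ≤ i ≤ n} |p_{n-i}/p_n|^{1/i}`, then `r1plus/(2n) ≤ r1 ≤ r1plus`. -/
theorem root_radius_bounds (n : ℕ) (hn : 1 ≤ n) (p : Polynomial ℂ)
    (hdeg : p.natDegree = n) (hpn : p.coeff n ≠ 0)
    (r1 : ℝ)
    (hub : ∀ x ∈ p.roots, ‖x‖ ≤ r1)
    (hmem : ∃ x ∈ p.roots, ‖x‖ = r1)
    (r1plus : ℝ)
    (hr1plus : r1plus = 2 * (Finset.Icc 1 n).sup' (Finset.nonempty_Icc.mpr hn)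
      (fun i => ‖p.coeff (n - i) / p.coeff n‖ ^ ((1 : ℝ) / (i : ℝ)))) :
    r1plus / (2 * n) ≤ r1 ∧ r1 ≤ r1plus := by
  obtain ⟨x0, hx0, hx0r⟩ := hmem
  have hr1 : 0 ≤ r1 := hx0r ▸ norm_nonneg x0
  have hpnpos : 0 < ‖p.coeff n‖ := norm_pos_iff.mpr hpn
  set M := (Finset.Icc 1 n).sup' (Finset.nonempty_Icc.mpr hn)
      (fun i => (‖p.coeff (n - i) / p.coeff n‖) ^ ((1 : ℝ) / (i : ℝ))) with hMdef
  have hM0 : 0 ≤ M := by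
    refine le_trans ?_ (Finset.le_sup' _ (Finset.mem_Icc.mpr ⟨le_refl 1, hn⟩))
    exact Real.rpow_nonneg (norm_nonneg _) _
  -- card of roots
  have hcard : Multiset.card p.roots = p.natDegree :=
    splits_iff_card_roots.mp (IsAlgClosed.splits p)
  -- coefficient ratio in terms of esymm
  have hratio : ∀ i ∈ Finset.Icc 1 n,
      ‖p.coeff (n - i) / p.coeff n‖ = ‖p.roots.esymm i‖ := by
    intro i hi
    obtain ⟨hi1, hin⟩ := Finset.mem_Icc.mp hi
    have hle : n - i ≤ p.natDegree := by omega
    have hv := Polynomial.coeff_eq_esymm_roots_of_card hcard hle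
    have hnd : p.natDegree - (n - i) = i := by omega
    rw [hnd] at hv
    have hlc : p.leadingCoeff = p.coeff n := by rw [← hdeg]; rfl
    rw [hlc] at hv
    rw [hv, mul_assoc, mul_comm (p.coeff n), mul_div_assoc, div_self hpn, mul_one,
      norm_mul, norm_pow, norm_neg, norm_one, one_pow, one_mul]
  -- Lower bound: M ≤ n * r1
  have hMle : M ≤ (n : ℝ) * r1 := by
    apply Finset.sup'_le
    intro i hi
    obtain ⟨hi1, hin⟩ := Finset.mem_Icc.mp hi
    have hipos : (0:ℝ) < i := by exact_mod_cast hi1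
    have hbase : ‖p.coeff (n - i) / p.coeff n‖ ≤ ((n:ℝ) * r1) ^ i := by
      rw [hratio i hi]
      calc ‖p.roots.esymm i‖
          ≤ ((Multiset.card p.roots).choose i : ℝ) * r1 ^ i := abs_esymm_le _ _ _ hr1 hub
        _ = ((n.choose i : ℕ) : ℝ) * r1 ^ i := by rw [hcard, hdeg]
        _ ≤ ((n ^ i : ℕ) : ℝ) * r1 ^ i :=
            mul_le_mul_of_nonneg_right (by exact_mod_cast Nat.choose_le_pow n i)
              (pow_nonneg hr1 i)
        _ = ((n:ℝ) * r1) ^ i := by push_cast; rw [mul_pow]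
    have hnr : (0:ℝ) ≤ (n:ℝ) * r1 := by positivity
    calc ‖p.coeff (n - i) / p.coeff n‖ ^ ((1:ℝ)/(i:ℝ))
        ≤ (((n:ℝ) * r1) ^ i) ^ ((1:ℝ)/(i:ℝ)) :=
          Real.rpow_le_rpow (norm_nonneg _) hbase (by positivity)
      _ = (n:ℝ) * r1 := by
          rw [← Real.rpow_natCast ((n:ℝ)*r1) i, ← Real.rpow_mul hnr,
            mul_one_div_cancel (ne_of_gt hipos), Real.rpow_one]
  constructor
  · -- r1plus / (2n) ≤ r1
    rw [hr1plus, div_le_iff₀ (by positivity)]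
    have hn1 : (1:ℝ) ≤ n := by exact_mod_cast hn
    nlinarith [hMle]
  · -- r1 ≤ r1plus = 2M
    by_contra hcon
    push_neg at hcon
    rw [hr1plus] at hcon
    have hr1pos : 0 < r1 := lt_of_le_of_lt (by linarith) hcon
    have hMhalf : M < r1 / 2 := by linarith
    -- each coeff bound: |p_k| ≤ |p_n| * M^(n-k) for k < n
    have hcoeff : ∀ k, k < n → ‖p.coeff k‖ ≤ ‖p.coeff n‖ * M ^ (n - k) := by
      intro k hk
      set i := n - k with hidef
      have hi1 : 1 ≤ i := by omega
      have hin : i ≤ n := by omega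
      have hmemi : i ∈ Finset.Icc 1 n := Finset.mem_Icc.mpr ⟨hi1, hin⟩
      have hsup := Finset.le_sup' (f := fun i => (‖p.coeff (n - i) / p.coeff n‖) ^ ((1 : ℝ) / (i : ℝ))) hmemi
      rw [← hMdef] at hsup
      have hnk : n - i = k := by omega
      rw [hnk] at hsup
      have hipos : (0:ℝ) < i := by exact_mod_cast hi1
      have habs : ‖p.coeff k / p.coeff n‖ ≤ M ^ i := by
        have h2 : (‖p.coeff k / p.coeff n‖ ^ ((1:ℝ)/(i:ℝ))) ^ (i:ℕ) ≤ M ^ (i:ℕ) :=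
          pow_le_pow_left₀ (Real.rpow_nonneg (norm_nonneg _) _) hsup i
        rwa [← Real.rpow_natCast (‖p.coeff k / p.coeff n‖ ^ ((1:ℝ)/(i:ℝ))) i,
          ← Real.rpow_mul (norm_nonneg _), one_div_mul_cancel (ne_of_gt hipos),
          Real.rpow_one] at h2
      rw [norm_div] at habs
      rw [div_le_iff₀ hpnpos] at habs
      rw [mul_comm] at habs
      exact habs
    -- p(x0) = 0 expansion
    have hroot : p.eval x0 = 0 := (Polynomial.mem_roots'.mp hx0).2
    have heval : p.eval x0 = ∑ k ∈ Finset.range (n + 1), p.coeff k * x0 ^ k := by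
      rw [Polynomial.eval_eq_sum_range, hdeg]
    rw [heval, Finset.sum_range_succ] at hroot
    have hkey : p.coeff n * x0 ^ n = -∑ k ∈ Finset.range n, p.coeff k * x0 ^ k := by
      linear_combination hroot
    have habs0 : ‖x0‖ = r1 := hx0r
    have hLHS : ‖p.coeff n * x0 ^ n‖ = ‖p.coeff n‖ * r1 ^ n := by
      rw [norm_mul, norm_pow, habs0]
    have hchain : ‖p.coeff n‖ * r1 ^ n
        ≤ ∑ k ∈ Finset.range n, ‖p.coeff n‖ * M ^ (n-k) * r1 ^ k := by
      rw [← hLHS, hkey, norm_neg]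
      calc ‖∑ k ∈ Finset.range n, p.coeff k * x0 ^ k‖
          ≤ ∑ k ∈ Finset.range n, ‖p.coeff k * x0 ^ k‖ :=
            norm_sum_le _ _
        _ ≤ ∑ k ∈ Finset.range n, ‖p.coeff n‖ * M ^ (n-k) * r1 ^ k := by
            apply Finset.sum_le_sum
            intro k hk
            rw [norm_mul, norm_pow, habs0]
            exact mul_le_mul_of_nonneg_right (hcoeff k (Finset.mem_range.mp hk))
              (pow_nonneg hr1 k)
    have hstep : ∀ k ∈ Finset.range n,
        ‖p.coeff n‖ * M ^ (n-k) * r1 ^ k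
          ≤ ‖p.coeff n‖ * r1 ^ n * ((1:ℝ)/2) ^ (n-k) := by
      intro k hk
      have hk' : k < n := Finset.mem_range.mp hk
      have h1 : M ^ (n-k) ≤ (r1/2) ^ (n-k) := pow_le_pow_left₀ hM0 (le_of_lt hMhalf) _
      have hnk : n - k + k = n := Nat.sub_add_cancel (le_of_lt hk')
      have h2 : (r1/2) ^ (n-k) * r1 ^ k = r1 ^ n * ((1:ℝ)/2) ^ (n-k) := by
        have e1 : (r1/2 : ℝ) = r1 * (1/2) := by ring
        rw [e1, mul_pow, mul_comm (r1 ^ (n-k)) (((1:ℝ)/2) ^ (n-k)), mul_assoc, ← pow_add, hnk,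
          mul_comm]
      calc ‖p.coeff n‖ * M ^ (n-k) * r1 ^ k
          ≤ ‖p.coeff n‖ * (r1/2) ^ (n-k) * r1 ^ k := by gcongr
        _ = ‖p.coeff n‖ * r1 ^ n * ((1:ℝ)/2) ^ (n-k) := by
            rw [mul_assoc, h2, ← mul_assoc]
    have hsum : ∑ k ∈ Finset.range n, ‖p.coeff n‖ * M ^ (n-k) * r1 ^ k
        ≤ ‖p.coeff n‖ * r1 ^ n
          * ∑ k ∈ Finset.range n, ((1:ℝ)/2) ^ (n-k) := by
      rw [Finset.mul_sum]
      exact Finset.sum_le_sum hstep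
    have hlt : ‖p.coeff n‖ * r1 ^ n * ∑ k ∈ Finset.range n, ((1:ℝ)/2) ^ (n-k)
        < ‖p.coeff n‖ * r1 ^ n * 1 :=
      mul_lt_mul_of_pos_left (geo_sum_lt n hn) (by positivity)
    rw [mul_one] at hlt
    linarith
end

section
/- Let z, z' ∈ ℂ, let ρ' > 0 with 2ρ' ≤ |z − z'|, and let a, b ∈ ℂ satisfy |a − z| ≤ ρ' and |b − z'| ≤ ρ'. Then |Im((b − a)·conj(z' − z))| ≤ 2ρ'·|b − a|; equivalently, the sine of the angle between the direction b − a of any line meeting both discs D(z, ρ') and D(z', ρ') and the direction z' − z of the line through the centers has absolute value at most 2ρ'/|z − z'|. -/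
/-- If the discs `D(z, ρ')` and `D(z', ρ')` with `2ρ' ≤ |z − z'|` contain
points `a` and `b` respectively, then `|Im((b − a)·conj(z' − z))| ≤ 2ρ'·|b − a|`:
the sine of the angle between the chord direction `b − a` and the direction `z' − z`
of the line through the centers is at most `2ρ'/|z − z'|` in absolute value. -/
theorem chord_angle_bound (z z' : ℂ) (ρ' : ℝ) (hρ : 0 < ρ')
    (hsep : 2 * ρ' ≤ ‖z - z'‖)
    (a b : ℂ) (ha : ‖a - z‖ ≤ ρ') (hb : ‖b - z'‖ ≤ ρ') :
    |((b - a) * (starRingEnd ℂ) (z' - z)).im| ≤ 2 * ρ' * ‖b - a‖ := by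
  set w : ℂ := (a - z) - (b - z') with hw
  have hdecomp : z' - z = (b - a) + w := by rw [hw]; ring
  have hwabs : ‖w‖ ≤ 2 * ρ' := by
    calc ‖w‖ ≤ ‖a - z‖ + ‖b - z'‖ := by
          have h1 := norm_add_le (a - z) (-(b - z'))
          have h2 : ‖-(b - z')‖ = ‖b - z'‖ :=
            norm_neg _
          rw [h2] at h1
          simpa [hw, sub_eq_add_neg] using h1
      _ ≤ ρ' + ρ' := add_le_add ha hb
      _ = 2 * ρ' := by ring
  have hsplit : ((b - a) * (starRingEnd ℂ) (z' - z)).im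
      = ((b - a) * (starRingEnd ℂ) w).im := by
    rw [hdecomp, map_add, mul_add, Complex.add_im, Complex.mul_conj]
    simp
  rw [hsplit]
  calc |((b - a) * (starRingEnd ℂ) w).im|
      ≤ ‖(b - a) * (starRingEnd ℂ) w‖ := Complex.abs_im_le_norm _
    _ = ‖b - a‖ * ‖w‖ := by
        rw [norm_mul, Complex.norm_conj]
    _ ≤ ‖b - a‖ * (2 * ρ') :=
        mul_le_mul_of_nonneg_left hwabs (norm_nonneg _)
    _ = 2 * ρ' * ‖b - a‖ := by ring
end

section
/- (Measure-theoretic form of Lemma 1.) Let z, z' ∈ ℂ, ρ' > 0 with |z − z'| > 2ρ', and let w ∈ ℂ with |w − z| ≤ ρ'. Then the set of angles β ∈ [0, 2π] for which the straight line through w with direction e^{iβ}, namely {w + t·e^{iβ} : t ∈ ℝ}, intersects the closed disc D(z', ρ') has Lebesgue measure at most 4·arcsin(2ρ'/|z − z'|). In particular, if β is chosen uniformly at random in [0, 2π], the line through the disc D(z, ρ') at angle β intersects D(z', ρ') with probability at most (2/π)·arcsin(2ρ'/|z − z'|). -/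
open MeasureTheory Real

set_option maxHeartbeats 1600000 in
private lemma tripleIneq' (c θ L : ℝ) (hθ : 0 ≤ θ) (hL : 0 < L) :
    max (min (c+θ) L - max (c-θ) 0) 0 + max (min (c+L+θ) L - max (c+L-θ) 0) 0
      + max (min (c+2*L+θ) L - max (c+2*L-θ) 0) 0 ≤ 2*θ := by
  simp only [min_def, max_def]
  split_ifs <;> linarith

set_option maxHeartbeats 1600000 in
private lemma pairIneq' (c θ L : ℝ) (hθ : 0 ≤ θ) (hL : 0 < L) :
    max (min (c+θ) L - max (c-θ) 0) 0 + max (min (c+L+θ) L - max (c+L-θ) 0) 0 ≤ 2*θ := by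
  simp only [min_def, max_def]
  split_ifs <;> linarith


private lemma ofReal_max_zero' (x : ℝ) : ENNReal.ofReal x = ENNReal.ofReal (max x 0) := by
  rcases le_total x 0 with h | h
  · rw [ENNReal.ofReal_of_nonpos h, max_eq_right h, ENNReal.ofReal_zero]
  · rw [max_eq_left h]

private lemma ofReal_add3_le' {a b c d : ℝ} (h : max a 0 + max b 0 + max c 0 ≤ d) :
    ENNReal.ofReal a + ENNReal.ofReal b + ENNReal.ofReal c ≤ ENNReal.ofReal d := by
  rw [ofReal_max_zero' a, ofReal_max_zero' b, ofReal_max_zero' c,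
    ← ENNReal.ofReal_add (le_max_right _ _) (le_max_right _ _),
    ← ENNReal.ofReal_add (by positivity) (le_max_right _ _)]
  exact ENNReal.ofReal_le_ofReal h

private lemma ofReal_add2_le' {a b d : ℝ} (h : max a 0 + max b 0 ≤ d) :
    ENNReal.ofReal a + ENNReal.ofReal b ≤ ENNReal.ofReal d := by
  rw [ofReal_max_zero' a, ofReal_max_zero' b,
    ← ENNReal.ofReal_add (le_max_right _ _) (le_max_right _ _)]
  exact ENNReal.ofReal_le_ofReal h

private lemma tripleVol' (c θ L : ℝ) (hθ : 0 ≤ θ) (hL : 0 < L) :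
    MeasureTheory.volume (Set.Icc (c-θ) (c+θ) ∩ Set.Icc 0 L)
      + MeasureTheory.volume (Set.Icc (c+L-θ) (c+L+θ) ∩ Set.Icc 0 L)
      + MeasureTheory.volume (Set.Icc (c+2*L-θ) (c+2*L+θ) ∩ Set.Icc 0 L)
      ≤ ENNReal.ofReal (2*θ) := by
  rw [Set.Icc_inter_Icc, Set.Icc_inter_Icc, Set.Icc_inter_Icc,
    Real.volume_Icc, Real.volume_Icc, Real.volume_Icc]
  exact ofReal_add3_le' (tripleIneq' c θ L hθ hL)

private lemma pairVol' (c θ L : ℝ) (hθ : 0 ≤ θ) (hL : 0 < L) :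
    MeasureTheory.volume (Set.Icc (c-θ) (c+θ) ∩ Set.Icc 0 L)
      + MeasureTheory.volume (Set.Icc (c+L-θ) (c+L+θ) ∩ Set.Icc 0 L)
      ≤ ENNReal.ofReal (2*θ) := by
  rw [Set.Icc_inter_Icc, Set.Icc_inter_Icc, Real.volume_Icc, Real.volume_Icc]
  exact ofReal_add2_le' (pairIneq' c θ L hθ hL)

private lemma sinabs' (y : ℝ) (h : |y| ≤ π) : |Real.sin y| = Real.sin |y| := by
  rcases le_or_gt 0 y with h0 | h0
  · rw [abs_of_nonneg h0, abs_of_nonneg]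
    exact Real.sin_nonneg_of_nonneg_of_le_pi h0 (by rwa [abs_of_nonneg h0] at h)
  · rw [abs_of_neg h0, abs_of_nonpos, Real.sin_neg]
    apply Real.sin_nonpos_of_nonpos_of_neg_pi_le h0.le
    rw [abs_of_neg h0] at h; linarith

private lemma cover' (α θ : ℝ) (hα1 : -π < α) (hα2 : α ≤ π) (hθ0 : 0 ≤ θ) (hθ2 : θ ≤ π/2) :
    {β : ℝ | β ∈ Set.Icc 0 (2*π) ∧ |Real.sin (β - α)| ≤ Real.sin θ} ⊆
      (((Set.Icc (α-π-θ) (α-π+θ) ∩ Set.Icc 0 (2*π))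
          ∪ (Set.Icc (α-π+2*π-θ) (α-π+2*π+θ) ∩ Set.Icc 0 (2*π))
          ∪ (Set.Icc (α-π+2*(2*π)-θ) (α-π+2*(2*π)+θ) ∩ Set.Icc 0 (2*π)))
        ∪ ((Set.Icc (α-θ) (α+θ) ∩ Set.Icc 0 (2*π))
          ∪ (Set.Icc (α+2*π-θ) (α+2*π+θ) ∩ Set.Icc 0 (2*π)))) := by
  rintro β ⟨⟨hb0, hb2⟩, hs⟩
  have hπ := Real.pi_pos
  set x := β - α with hx
  set k := round (x / π) with hk
  have hk1 : |x / π - k| ≤ 1/2 := abs_sub_round _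
  have hy : |x - k * π| ≤ π / 2 := by
    have he : x - k * π = (x/π - k) * π := by field_simp
    rw [he, abs_mul, abs_of_pos hπ]
    nlinarith [abs_nonneg (x/π - (k:ℝ))]
  have hsx : |Real.sin x| = |Real.sin (x - k*π)| := by
    have h1 := Real.sin_add_int_mul_pi (x - k*π) k
    simp only [sub_add_cancel] at h1
    rw [h1, abs_mul]
    rcases Int.even_or_odd k with he | ho
    · rw [he.neg_one_zpow, abs_one, one_mul]
    · rw [ho.neg_one_zpow, abs_neg, abs_one, one_mul]
  have hyθ : |x - k * π| ≤ θ := by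
    have h2 : |Real.sin (x - k*π)| = Real.sin |x - k*π| := sinabs' _ (by linarith)
    have h1 : Real.arcsin (Real.sin |x - k*π|) = |x - k*π| :=
      Real.arcsin_sin (by linarith [abs_nonneg (x - k*π)]) hy
    calc |x - k*π| = Real.arcsin (Real.sin |x - k*π|) := h1.symm
      _ ≤ Real.arcsin (Real.sin θ) := Real.monotone_arcsin (by rw [← h2, ← hsx]; exact hs)
      _ = θ := Real.arcsin_sin (by linarith) hθ2
  have hxl : -π ≤ x := by simp only [hx]; linarith
  have hxu : x < 3*π := by simp only [hx]; linarith
  have hk1' := abs_le.mp hk1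
  have hkl : (-1 : ℤ) ≤ k := by
    by_contra h
    push_neg at h
    have hc : (k:ℝ) ≤ -2 := by exact_mod_cast (by omega : k ≤ -2)
    have h3 : x ≤ ((k:ℝ) + 1/2) * π := by
      rw [← div_le_iff₀ hπ]; linarith [hk1'.2]
    nlinarith [mul_le_mul_of_nonneg_right (show (k:ℝ)+1/2 ≤ -3/2 by linarith) hπ.le]
  have hku : k ≤ 3 := by
    by_contra h
    push_neg at h
    have hc : (4:ℝ) ≤ (k:ℝ) := by exact_mod_cast (by omega : (4:ℤ) ≤ k)
    have h3 : ((k:ℝ) - 1/2) * π ≤ x := by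
      rw [← le_div_iff₀ hπ]; linarith [hk1'.1]
    nlinarith [mul_le_mul_of_nonneg_right (show (7:ℝ)/2 ≤ (k:ℝ)-1/2 by linarith) hπ.le]
  have habs := abs_le.mp hyθ
  have hm1 : α + k*π - θ ≤ β := by simp only [hx] at habs; linarith [habs.1]
  have hm2 : β ≤ α + k*π + θ := by simp only [hx] at habs; linarith [habs.2]
  interval_cases k <;> push_cast at hm1 hm2
  · exact Or.inl (Or.inl (Or.inl ⟨⟨by linarith, by linarith⟩, hb0, hb2⟩))
  · exact Or.inr (Or.inl ⟨⟨by linarith, by linarith⟩, hb0, hb2⟩)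
  · exact Or.inl (Or.inl (Or.inr ⟨⟨by linarith, by linarith⟩, hb0, hb2⟩))
  · exact Or.inr (Or.inr ⟨⟨by linarith, by linarith⟩, hb0, hb2⟩)
  · exact Or.inl (Or.inr ⟨⟨by linarith, by linarith⟩, hb0, hb2⟩)

private lemma geomStep' (z z' w : ℂ) (ρ' : ℝ) (hρ : 0 < ρ')
    (hsep : 2 * ρ' < ‖z - z'‖) (hw : ‖w - z‖ ≤ ρ')
    (β t : ℝ) (ht : ‖w + (t:ℂ) * Complex.exp (β * Complex.I) - z'‖ ≤ ρ') :
    |Real.sin (β - (z' - w).arg)| ≤ 2 * ρ' / ‖z - z'‖ := by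
  set u := z' - w with hu
  set α := u.arg with hα
  set R := ‖z - z'‖ with hR
  have hRpos : 0 < R := by rw [hR]; linarith
  have hprod : (w + (t:ℂ) * Complex.exp (β * Complex.I) - z') * Complex.exp (-(β:ℂ) * Complex.I)
      = (t:ℂ) - u * Complex.exp (-(β:ℂ) * Complex.I) := by
    have he : Complex.exp (β * Complex.I) * Complex.exp (-(β:ℂ) * Complex.I) = 1 := by
      rw [← Complex.exp_add]; ring_nf; exact Complex.exp_zero
    calc (w + (t:ℂ) * Complex.exp (β * Complex.I) - z') * Complex.exp (-(β:ℂ) * Complex.I)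
        = (t:ℂ) * (Complex.exp (β * Complex.I) * Complex.exp (-(β:ℂ) * Complex.I))
          - u * Complex.exp (-(β:ℂ) * Complex.I) := by rw [hu]; ring
      _ = (t:ℂ) - u * Complex.exp (-(β:ℂ) * Complex.I) := by rw [he, mul_one]
  have him : |(u * Complex.exp (-(β:ℂ) * Complex.I)).im| ≤ ρ' := by
    have h1 : |((w + (t:ℂ) * Complex.exp (β * Complex.I) - z') * Complex.exp (-(β:ℂ) * Complex.I)).im| ≤ ρ' := by
      refine le_trans (Complex.abs_im_le_norm _) ?_
      rw [norm_mul, Complex.norm_exp]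
      simp only [Complex.neg_re, Complex.mul_re, Complex.ofReal_re, Complex.I_re, Complex.ofReal_im, Complex.I_im]
      norm_num
      exact ht
    rw [hprod] at h1
    rwa [Complex.sub_im, Complex.ofReal_im, zero_sub, abs_neg] at h1
  have heq : (u * Complex.exp (-(β:ℂ) * Complex.I)).im = ‖u‖ * Real.sin (α - β) := by
    conv_lhs => rw [← Complex.norm_mul_exp_arg_mul_I u]
    rw [mul_assoc, ← Complex.exp_add, ← hα]
    have : (α:ℂ) * Complex.I + -(β:ℂ) * Complex.I = ((α - β : ℝ) : ℂ) * Complex.I := by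
      push_cast; ring
    rw [this, Complex.mul_im]
    simp only [Complex.ofReal_re, Complex.ofReal_im, Complex.exp_ofReal_mul_I_im,
      Complex.exp_ofReal_mul_I_re, zero_mul, add_zero]
  rw [heq] at him
  rw [abs_mul, abs_norm] at him
  have hrge : R - ρ' ≤ ‖u‖ := by
    have h2 : ‖z' - z‖ - ‖w - z‖ ≤ ‖(z' - z) - (w - z)‖ := norm_sub_norm_le _ _
    have h3 : (z' - z) - (w - z) = u := by rw [hu]; ring
    rw [h3] at h2
    have h4 : ‖z' - z‖ = R := by rw [hR, ← neg_sub z z', norm_neg]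
    rw [h4] at h2
    linarith [h2, hw]
  have hsin1 : |Real.sin (α - β)| ≤ 1 := abs_le.mpr ⟨Real.neg_one_le_sin _, Real.sin_le_one _⟩
  have hflip : |Real.sin (β - α)| = |Real.sin (α - β)| := by
    rw [← abs_neg, ← Real.sin_neg]; ring_nf
  rw [hflip, le_div_iff₀ hRpos]
  nlinarith [abs_nonneg (Real.sin (α - β)),
    mul_le_mul_of_nonneg_left hrge (abs_nonneg (Real.sin (α - β)))]

/-- measure-theoretic form of Lemma 1: If `|z − z'| > 2ρ' > 0` and
`|w − z| ≤ ρ'`, then the set of angles `β ∈ [0, 2π]` for which the line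
`{w + t·e^{iβ} : t ∈ ℝ}` meets the closed disc `D(z', ρ')` has Lebesgue measure at most
`4·arcsin(2ρ'/|z − z'|)`; in particular a uniformly random `β ∈ [0, 2π]` yields such a
line with probability at most `(2/π)·arcsin(2ρ'/|z − z'|)`. -/
theorem measure_angles_hitting_far_disc (z z' w : ℂ) (ρ' : ℝ) (hρ : 0 < ρ')
    (hsep : 2 * ρ' < ‖z - z'‖) (hw : ‖w - z‖ ≤ ρ') :
    volume {β : ℝ | β ∈ Set.Icc 0 (2 * π) ∧
        ∃ t : ℝ, w + (t : ℂ) * Complex.exp (β * Complex.I) ∈ Metric.closedBall z' ρ'}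
      ≤ ENNReal.ofReal (4 * Real.arcsin (2 * ρ' / ‖z - z'‖)) ∧
    (volume {β : ℝ | β ∈ Set.Icc 0 (2 * π) ∧
        ∃ t : ℝ, w + (t : ℂ) * Complex.exp (β * Complex.I) ∈ Metric.closedBall z' ρ'}).toReal
        / (2 * π)
      ≤ (2 / π) * Real.arcsin (2 * ρ' / ‖z - z'‖) := by
  have hπ := Real.pi_pos
  set R := ‖z - z'‖ with hR
  have hRpos : 0 < R := by linarith
  set s := 2 * ρ' / R with hs
  have hs0 : 0 < s := by positivity
  have hs1 : s < 1 := by rw [hs, div_lt_one hRpos]; linarith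
  set θ := Real.arcsin s with hθ
  have hθ0 : 0 ≤ θ := Real.arcsin_nonneg.mpr hs0.le
  have hθ2 : θ ≤ π / 2 := Real.arcsin_le_pi_div_two s
  have hsinθ : Real.sin θ = s := Real.sin_arcsin (by linarith) hs1.le
  set α := (z' - w).arg with hα
  have hα1 : -π < α := Complex.neg_pi_lt_arg _
  have hα2 : α ≤ π := Complex.arg_le_pi _
  set S := {β : ℝ | β ∈ Set.Icc 0 (2 * π) ∧
      ∃ t : ℝ, w + (t : ℂ) * Complex.exp (β * Complex.I) ∈ Metric.closedBall z' ρ'} with hS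
  -- step 1: S ⊆ sine condition set
  have hsub : S ⊆ {β : ℝ | β ∈ Set.Icc 0 (2*π) ∧ |Real.sin (β - α)| ≤ Real.sin θ} := by
    rintro β ⟨hb, t, ht⟩
    refine ⟨hb, ?_⟩
    rw [hsinθ]
    rw [Metric.mem_closedBall, Complex.dist_eq] at ht
    exact geomStep' z z' w ρ' hρ hsep hw β t ht
  have hsub2 := hsub.trans (cover' α θ hα1 hα2 hθ0 hθ2)
  have hU1 : volume ((Set.Icc (α-π-θ) (α-π+θ) ∩ Set.Icc 0 (2*π))
        ∪ (Set.Icc (α-π+2*π-θ) (α-π+2*π+θ) ∩ Set.Icc 0 (2*π))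
        ∪ (Set.Icc (α-π+2*(2*π)-θ) (α-π+2*(2*π)+θ) ∩ Set.Icc 0 (2*π)))
      ≤ ENNReal.ofReal (2*θ) := by
    refine le_trans (measure_union_le _ _) ?_
    refine le_trans (add_le_add_left (measure_union_le _ _) _) ?_
    exact tripleVol' (α-π) θ (2*π) hθ0 (by linarith)
  have hU2 : volume ((Set.Icc (α-θ) (α+θ) ∩ Set.Icc 0 (2*π))
        ∪ (Set.Icc (α+2*π-θ) (α+2*π+θ) ∩ Set.Icc 0 (2*π)))
      ≤ ENNReal.ofReal (2*θ) := by
    refine le_trans (measure_union_le _ _) ?_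
    exact pairVol' α θ (2*π) hθ0 (by linarith)
  have key : volume S ≤ ENNReal.ofReal (4 * θ) := by
    refine le_trans (measure_mono hsub2) ?_
    refine le_trans (measure_union_le _ _) ?_
    refine le_trans (add_le_add hU1 hU2) ?_
    rw [← ENNReal.ofReal_add (by positivity) (by positivity)]
    apply ENNReal.ofReal_le_ofReal
    linarith
  refine ⟨key, ?_⟩
  have htr : (volume S).toReal ≤ 4 * θ :=
    ENNReal.toReal_le_of_le_ofReal (by positivity) key
  have h2π : (0:ℝ) < 2 * π := by linarith
  calc (volume S).toReal / (2*π) ≤ (4*θ) / (2*π) := by gcongr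
    _ = (2/π) * θ := by field_simp; ring
end

section
/- (Analog of Theorem 3(i).) Let ρ' > 0 and Δ > 2ρ'. Let z ∈ ℂ, let w ∈ ℂ with |w − z| ≤ ρ', and let z_1, …, z_m ∈ ℂ satisfy |z_j − z| ≥ Δ for all j. Then the set of angles β ∈ [0, 2π] for which the line {w + t·e^{iβ} : t ∈ ℝ} intersects at least one of the closed discs D(z_j, ρ'), j = 1, …, m, has Lebesgue measure at most 4·m·arcsin(2ρ'/Δ). -/
open MeasureTheory Real


lemma sin_small_cases {a x : ℝ} (ha : 0 < a) (ha' : a ≤ π/2) (hx0 : 0 ≤ x) (hxπ : x ≤ π)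
    (h : Real.sin x ≤ Real.sin a) : x ≤ a ∨ π - a ≤ x := by
  by_contra hc
  push_neg at hc
  obtain ⟨h1, h2⟩ := hc
  rcases le_total x (π/2) with hx | hx
  · have := Real.strictMonoOn_sin (Set.mem_Icc.2 ⟨by linarith, by linarith⟩)
      (Set.mem_Icc.2 ⟨by linarith, by linarith⟩) h1
    linarith
  · have hs : Real.sin (π - x) = Real.sin x := Real.sin_pi_sub x
    have hmem1 : a ∈ Set.Icc (-(π/2)) (π/2) := Set.mem_Icc.2 ⟨by linarith, ha'⟩
    have hmem2 : π - x ∈ Set.Icc (-(π/2)) (π/2) := Set.mem_Icc.2 ⟨by linarith, by linarith⟩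
    have := Real.strictMonoOn_sin hmem1 hmem2 (by linarith)
    linarith

lemma abs_sin_small_cases {a x : ℝ} (ha : 0 < a) (ha' : a ≤ π/2) (hx0 : -π ≤ x) (hxπ : x ≤ 2*π)
    (h : |Real.sin x| ≤ Real.sin a) :
    x ∈ Set.Icc (-π) (-π + a) ∪ Set.Icc (-a) a ∪ Set.Icc (π - a) (π + a) ∪
      Set.Icc (2*π - a) (2*π) := by
  have hπ := Real.pi_pos
  rcases le_total x 0 with hx | hx
  · have hneg : Real.sin x ≤ 0 := Real.sin_nonpos_of_nonpos_of_neg_pi_le hx hx0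
    have hy : Real.sin (-x) ≤ Real.sin a := by
      rw [Real.sin_neg]; rw [abs_le] at h; linarith
    rcases sin_small_cases ha ha' (by linarith) (by linarith) hy with h' | h'
    · exact Or.inl (Or.inl (Or.inr ⟨by linarith, by linarith⟩))
    · exact Or.inl (Or.inl (Or.inl ⟨by linarith, by linarith⟩))
  · rcases le_total x π with hx2 | hx2
    · have hnn : 0 ≤ Real.sin x := Real.sin_nonneg_of_nonneg_of_le_pi hx hx2
      have hy : Real.sin x ≤ Real.sin a := by rw [abs_of_nonneg hnn] at h; exact h
      rcases sin_small_cases ha ha' hx hx2 hy with h' | h'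
      · exact Or.inl (Or.inl (Or.inr ⟨by linarith, h'⟩))
      · exact Or.inl (Or.inr ⟨h', by linarith⟩)
    · have hy : Real.sin (x - π) ≤ Real.sin a := by
        have : Real.sin (x - π) = -Real.sin x := by
          rw [Real.sin_sub_pi]
        have hnn : 0 ≤ Real.sin (x - π) :=
          Real.sin_nonneg_of_nonneg_of_le_pi (by linarith) (by linarith)
        rw [abs_le] at h; linarith
      rcases sin_small_cases ha ha' (by linarith) (by linarith) hy with h' | h'
      · exact Or.inl (Or.inr ⟨by linarith, by linarith⟩)
      · exact Or.inr ⟨by linarith, by linarith⟩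

lemma window_measure {a c : ℝ} (ha : 0 < a) (ha' : a ≤ π/2) (hc1 : -π ≤ c) (hc2 : c ≤ 0) :
    volume (Set.Icc c (c + 2*π) ∩ {x | |Real.sin x| ≤ Real.sin a})
      ≤ ENNReal.ofReal (4 * a) := by
  have hπ := Real.pi_pos
  have hsub : Set.Icc c (c + 2*π) ∩ {x | |Real.sin x| ≤ Real.sin a} ⊆
      Set.Icc c (-π + a) ∪ Set.Icc (max (-a) c) a ∪
      Set.Icc (π - a) (min (π + a) (c + 2*π)) ∪ Set.Icc (2*π - a) (c + 2*π) := by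
    rintro x ⟨⟨hx1, hx2⟩, hx3⟩
    rcases abs_sin_small_cases ha ha' (by linarith) (by linarith) hx3 with (((h|h)|h)|h)
    · exact Or.inl (Or.inl (Or.inl ⟨hx1, by linarith [h.2]⟩))
    · exact Or.inl (Or.inl (Or.inr ⟨max_le h.1 hx1, h.2⟩))
    · exact Or.inl (Or.inr ⟨h.1, le_min h.2 hx2⟩)
    · exact Or.inr ⟨h.1, hx2⟩
  refine le_trans (measure_mono hsub) ?_
  refine le_trans (measure_union_le _ _) ?_
  refine le_trans (add_le_add (measure_union_le _ _) le_rfl) ?_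
  refine le_trans (add_le_add (add_le_add (measure_union_le _ _) le_rfl) le_rfl) ?_
  rw [Real.volume_Icc, Real.volume_Icc, Real.volume_Icc, Real.volume_Icc]
  rcases le_total c (a - π) with h2 | h2
  · rw [max_eq_left (by linarith : c ≤ -a), min_eq_right (by linarith : c + 2*π ≤ π + a)]
    rw [show c + 2*π - (2*π - a) = a + c by ring,
      ENNReal.ofReal_eq_zero.2 (by linarith : a + c ≤ 0), add_zero,
      ← ENNReal.ofReal_add (by linarith) (by linarith),
      ← ENNReal.ofReal_add (by linarith) (by linarith)]
    exact ENNReal.ofReal_le_ofReal (by linarith)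
  · rw [min_eq_left (by linarith : π + a ≤ c + 2*π),
      ENNReal.ofReal_eq_zero.2 (by linarith : -π + a - c ≤ 0), zero_add]
    rcases le_total c (-a) with h1 | h1
    · rw [max_eq_left h1,
        show c + 2*π - (2*π - a) = a + c by ring,
        ENNReal.ofReal_eq_zero.2 (by linarith : a + c ≤ 0), add_zero,
        ← ENNReal.ofReal_add (by linarith) (by linarith)]
      exact ENNReal.ofReal_le_ofReal (by linarith)
    · rw [max_eq_right h1,
        ← ENNReal.ofReal_add (by linarith) (by linarith),
        ← ENNReal.ofReal_add (by linarith) (by linarith)]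
      exact ENNReal.ofReal_le_ofReal (by linarith)

lemma angle_set_measure {a : ℝ} (ha : 0 < a) (ha' : a ≤ π/2) (θ : ℝ) :
    volume {β : ℝ | β ∈ Set.Icc 0 (2*π) ∧ |Real.sin (β - θ)| ≤ Real.sin a}
      ≤ ENNReal.ofReal (4 * a) := by
  have hπ := Real.pi_pos
  set n : ℤ := ⌊θ / π⌋ with hn
  set d : ℝ := θ - n * π with hd
  have hd0 : 0 ≤ d := by
    have h := Int.floor_le (θ / π)
    have : (n : ℝ) * π ≤ θ := by
      rw [hn]
      calc (⌊θ / π⌋ : ℝ) * π ≤ (θ / π) * π := by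
            exact mul_le_mul_of_nonneg_right h (le_of_lt hπ)
        _ = θ := by field_simp
    linarith [this]
  have hd1 : d ≤ π := by
    have h := Int.lt_floor_add_one (θ / π)
    have : θ < ((n : ℝ) + 1) * π := by
      rw [hn]
      calc θ = (θ / π) * π := by field_simp
        _ < ((⌊θ / π⌋ : ℝ) + 1) * π := by
            exact mul_lt_mul_of_pos_right h hπ
    nlinarith [this]
  have key : (fun x => x + d) ⁻¹' {β : ℝ | β ∈ Set.Icc 0 (2*π) ∧ |Real.sin (β - θ)| ≤ Real.sin a}
      = Set.Icc (-d) (-d + 2*π) ∩ {x | |Real.sin x| ≤ Real.sin a} := by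
    ext x
    have habs : |Real.sin (x + d - θ)| = |Real.sin x| := by
      have hx : x + d - θ = x + (-n : ℤ) * π := by
        rw [hd]; push_cast; ring
      rw [hx, Real.sin_add_int_mul_pi, abs_mul]
      rw [show |((-1 : ℝ) ^ (-n : ℤ))| = 1 by
        rcases Int.even_or_odd (-n) with h | h
        · rw [h.neg_one_zpow]; norm_num
        · rw [h.neg_one_zpow]; norm_num, one_mul]
    simp only [Set.mem_preimage, Set.mem_setOf_eq, Set.mem_Icc, Set.mem_inter_iff, habs]
    constructor
    · rintro ⟨⟨h1, h2⟩, h3⟩; exact ⟨⟨by linarith, by linarith⟩, h3⟩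
    · rintro ⟨⟨h1, h2⟩, h3⟩; exact ⟨⟨by linarith, by linarith⟩, h3⟩
  rw [← measure_preimage_add_right volume d, key]
  exact window_measure ha ha' (by linarith) (by linarith)

/-- analog of Theorem 3(i): Let `ρ' > 0`, `Δ > 2ρ'`, let `w` lie in the
disc `D(z, ρ')`, and let `z_1, …, z_m` be points with `|z_j − z| ≥ Δ` for all `j`.
Then the set of angles `β ∈ [0, 2π]` for which the line `{w + t·e^{iβ} : t ∈ ℝ}` meets
at least one disc `D(z_j, ρ')` has Lebesgue measure at most `4·m·arcsin(2ρ'/Δ)`. -/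
theorem measure_angles_hitting_some_far_disc (ρ' Δ : ℝ) (hρ : 0 < ρ') (hΔ : 2 * ρ' < Δ)
    (z w : ℂ) (hw : ‖w - z‖ ≤ ρ')
    (m : ℕ) (zs : Fin m → ℂ) (hzs : ∀ j, Δ ≤ ‖zs j - z‖) :
    volume {β : ℝ | β ∈ Set.Icc 0 (2 * π) ∧
        ∃ j : Fin m, ∃ t : ℝ,
          w + (t : ℂ) * Complex.exp (β * Complex.I) ∈ Metric.closedBall (zs j) ρ'}
      ≤ ENNReal.ofReal (4 * m * Real.arcsin (2 * ρ' / Δ)) := by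
  have hΔ0 : 0 < Δ := by linarith
  set s : ℝ := 2 * ρ' / Δ with hs
  have hs0 : 0 < s := by positivity
  have hs1 : s < 1 := by rw [hs, div_lt_one hΔ0]; linarith
  set a : ℝ := Real.arcsin s with haa
  have ha : 0 < a := Real.arcsin_pos.2 hs0
  have ha' : a ≤ π/2 := Real.arcsin_le_pi_div_two s
  have hsin : Real.sin a = s := Real.sin_arcsin (by linarith) (le_of_lt hs1)
  -- inclusion into a union
  have hsub : {β : ℝ | β ∈ Set.Icc 0 (2 * π) ∧
        ∃ j : Fin m, ∃ t : ℝ,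
          w + (t : ℂ) * Complex.exp (β * Complex.I) ∈ Metric.closedBall (zs j) ρ'} ⊆
      ⋃ j : Fin m, {β : ℝ | β ∈ Set.Icc 0 (2*π) ∧
        |Real.sin (β - Complex.arg (zs j - w))| ≤ Real.sin a} := by
    rintro β ⟨hβ, j, t, ht⟩
    rw [Metric.mem_closedBall, Complex.dist_eq] at ht
    set p : ℂ := zs j - w with hp
    set r : ℝ := ‖p‖ with hr
    set θ : ℝ := Complex.arg p with hθ
    have hr1 : Δ - ρ' ≤ r := by
      have htr : ‖zs j - z‖ ≤ r + ‖w - z‖ := by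
        calc ‖zs j - z‖ = ‖p + (w - z)‖ := by rw [hp]; ring_nf
          _ ≤ ‖p‖ + ‖w - z‖ := norm_add_le _ _
      have := hzs j
      linarith
    have hr0 : 0 < r := by linarith
    -- distance from center to line
    have him : |(p * Complex.exp (-(β : ℂ) * Complex.I)).im| ≤ ρ' := by
      have h1 : ‖(w + (t : ℂ) * Complex.exp (β * Complex.I) - zs j)
          * Complex.exp (-(β : ℂ) * Complex.I)‖ ≤ ρ' := by
        rw [norm_mul, show (-(β:ℂ) * Complex.I) = ((-β : ℝ) : ℂ) * Complex.I by push_cast; ring,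
          Complex.norm_exp_ofReal_mul_I, mul_one]
        exact ht
      have h2 : (w + (t : ℂ) * Complex.exp (β * Complex.I) - zs j)
          * Complex.exp (-(β : ℂ) * Complex.I)
          = (t : ℂ) - p * Complex.exp (-(β : ℂ) * Complex.I) := by
        have hEE : Complex.exp (β * Complex.I) * Complex.exp (-(β : ℂ) * Complex.I) = 1 := by
          rw [← Complex.exp_add, show (β:ℂ)*Complex.I + -(β:ℂ)*Complex.I = 0 by ring,
            Complex.exp_zero]
        rw [hp]
        linear_combination (t : ℂ) * hEE
      rw [h2] at h1
      have h3 := Complex.abs_im_le_norm ((t : ℂ) - p * Complex.exp (-(β : ℂ) * Complex.I))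
      simp only [Complex.sub_im, Complex.ofReal_im, zero_sub, abs_neg] at h3
      linarith
    -- compute the imaginary part
    have hcompute : (p * Complex.exp (-(β : ℂ) * Complex.I)).im = r * Real.sin (θ - β) := by
      have hpe : p = (r : ℂ) * Complex.exp (θ * Complex.I) := (Complex.norm_mul_exp_arg_mul_I p).symm
      rw [hpe, mul_assoc, ← Complex.exp_add]
      have : (θ : ℂ) * Complex.I + -(β : ℂ) * Complex.I = ((θ - β : ℝ) : ℂ) * Complex.I := by
        push_cast; ring
      rw [this]
      rw [Complex.mul_im, Complex.ofReal_re, Complex.ofReal_im, Complex.exp_ofReal_mul_I_im,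
        zero_mul, add_zero]
    rw [hcompute] at him
    have hsinb : |Real.sin (β - θ)| ≤ Real.sin a := by
      have h4 : |Real.sin (θ - β)| ≤ ρ' / r := by
        rw [abs_mul, abs_of_pos hr0] at him
        rw [le_div_iff₀ hr0]
        linarith [him]
      have h5 : ρ' / r ≤ s := by
        rw [hs, div_le_div_iff₀ hr0 hΔ0]
        nlinarith
      have h6 : |Real.sin (β - θ)| = |Real.sin (θ - β)| := by
        rw [show β - θ = -(θ - β) by ring, Real.sin_neg, abs_neg]
      rw [h6, hsin]
      linarith
    exact Set.mem_iUnion.2 ⟨j, ⟨hβ, hsinb⟩⟩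
  refine le_trans (measure_mono hsub) ?_
  refine le_trans (measure_iUnion_fintype_le _ _) ?_
  have hbound : ∀ j : Fin m, volume {β : ℝ | β ∈ Set.Icc 0 (2*π) ∧
      |Real.sin (β - Complex.arg (zs j - w))| ≤ Real.sin a} ≤ ENNReal.ofReal (4 * a) :=
    fun j => angle_set_measure ha ha' _
  calc ∑ j : Fin m, volume {β : ℝ | β ∈ Set.Icc 0 (2*π) ∧
        |Real.sin (β - Complex.arg (zs j - w))| ≤ Real.sin a}
      ≤ ∑ _j : Fin m, ENNReal.ofReal (4 * a) := Finset.sum_le_sum (fun j _ => hbound j)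
    _ = m * ENNReal.ofReal (4 * a) := by rw [Finset.sum_const, Finset.card_univ,
        Fintype.card_fin, nsmul_eq_mul]
    _ = ENNReal.ofReal (4 * m * a) := by
        rw [← ENNReal.ofReal_natCast m, ← ENNReal.ofReal_mul (by positivity)]
        congr 1
        ring
end

section
/- (Analog of Theorem 3(ii).) Let ρ' > 0 and Δ > 2ρ', let z_1, …, z_N ∈ ℂ be N points with pairwise distances |z_i − z_j| ≥ Δ for i ≠ j, and let w ∈ ℂ be any fixed point. Then the set of angles β ∈ [0, 2π] for which the line {w + t·e^{iβ} : t ∈ ℝ} intersects at least two of the closed discs D(z_1, ρ'), …, D(z_N, ρ') has Lebesgue measure at most 2·N·(N − 1)·arcsin(2ρ'/Δ). -/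
open MeasureTheory Real

open scoped ENNReal

lemma sincos_near (c : ℝ) (hc0 : 0 ≤ c) (hc : c < π / 2) {d : ℝ} (hd0 : 0 < d)
    (hd2 : d ≤ 2 * π) (hsin : |Real.sin d| ≤ Real.sin c) (hcos : 0 ≤ Real.cos d) :
    d ≤ c ∨ 2 * π - c ≤ d := by
  have hπ := Real.pi_pos
  rcases le_or_gt d (π / 2) with h1 | h1
  · left
    by_contra h
    push_neg at h
    have hsd : 0 ≤ Real.sin d := Real.sin_nonneg_of_nonneg_of_le_pi hd0.le (by linarith)
    have hm := Real.strictMonoOn_sin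
      ⟨by linarith, hc.le⟩ ⟨by linarith, h1⟩ h
    rw [abs_of_nonneg hsd] at hsin
    linarith
  · rcases lt_or_ge d (π + π / 2) with h2 | h2
    · exact absurd (Real.cos_neg_of_pi_div_two_lt_of_lt h1 h2) (not_lt.mpr hcos)
    · right
      set e := 2 * π - d with he_def
      have he0 : 0 ≤ e := by simp only [he_def]; linarith
      have he : e ≤ π / 2 := by simp only [he_def]; linarith
      have hse : Real.sin e = -Real.sin d := by
        rw [show e = -d + 2 * π by simp only [he_def]; ring, Real.sin_add_two_pi, Real.sin_neg]
      have hle : Real.sin e ≤ Real.sin c := by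
        refine le_trans (le_abs_self _) ?_
        rw [hse, abs_neg]; exact hsin
      have hec : e ≤ c := by
        by_contra h
        push_neg at h
        exact absurd (Real.strictMonoOn_sin
          ⟨by linarith, hc.le⟩ ⟨by linarith, he⟩ h) (not_lt.mpr hle)
      simp only [he_def] at hec; linarith

lemma cover_measure (θ s c : ℝ) (hc0 : 0 ≤ c) (hc : c < π / 2) (hsc : Real.sin c = s) :
    volume {x : ℝ | x ∈ Set.Icc 0 (2 * π) ∧ |Real.sin (θ - x)| ≤ s ∧ 0 ≤ Real.cos (θ - x)}
      ≤ ENNReal.ofReal (2 * c) := by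
  have hπ := Real.pi_pos
  have h2π : (0 : ℝ) < 2 * π := by linarith
  set A : Set ℝ := {x | |Real.sin (θ - x)| ≤ s ∧ 0 ≤ Real.cos (θ - x)} with hA_def
  have hAmeas : MeasurableSet A := by
    have m1 : Measurable fun x : ℝ => |Real.sin (θ - x)| :=
      (Real.continuous_sin.comp (continuous_const.sub continuous_id)).abs.measurable
    have m2 : Measurable fun x : ℝ => Real.cos (θ - x) :=
      (Real.continuous_cos.comp (continuous_const.sub continuous_id)).measurable
    exact (measurableSet_le m1 measurable_const).inter
      (measurableSet_le measurable_const m2)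
  have hAinv : ∀ g : AddSubgroup.zmultiples (2 * π), (fun x => g +ᵥ x) ⁻¹' A = A := by
    intro g
    obtain ⟨k, hk⟩ := AddSubgroup.mem_zmultiples_iff.mp g.2
    ext x
    have hkr : (g : ℝ) = k * (2 * π) := by rw [← hk]; simp [zsmul_eq_mul]
    have key : θ - ((g : ℝ) + x) = (θ - x) + (-k : ℤ) * (2 * π) := by
      rw [hkr]; push_cast; ring
    have hv : g +ᵥ x = (g : ℝ) + x := rfl
    simp only [Set.mem_preimage, hA_def, Set.mem_setOf_eq, hv, key,
      Real.sin_add_int_mul_two_pi, Real.cos_add_int_mul_two_pi]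
  have hfund := (isAddFundamentalDomain_Ioc h2π 0).measure_set_eq
    (isAddFundamentalDomain_Ioc h2π θ) hAmeas hAinv
  have hsub : A ∩ Set.Ioc θ (θ + 2 * π) ⊆
      Set.Icc θ (θ + c) ∪ Set.Icc (θ + 2 * π - c) (θ + 2 * π) := by
    rintro x ⟨⟨hx3, hx4⟩, hx1, hx2⟩
    have hd0 : 0 < x - θ := by linarith
    have hd2 : x - θ ≤ 2 * π := by linarith
    have hsin' : |Real.sin (x - θ)| ≤ Real.sin c := by
      rw [show x - θ = -(θ - x) by ring, Real.sin_neg, abs_neg, hsc]; exact hx3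
    have hcos' : 0 ≤ Real.cos (x - θ) := by
      rw [show x - θ = -(θ - x) by ring, Real.cos_neg]; exact hx4
    rcases sincos_near c hc0 hc hd0 hd2 hsin' hcos' with h | h
    · left; exact ⟨by linarith, by linarith⟩
    · right; exact ⟨by linarith, by linarith⟩
  have hmain : volume (A ∩ Set.Ioc θ (θ + 2 * π)) ≤ ENNReal.ofReal (2 * c) := by
    refine le_trans (measure_mono hsub) (le_trans (measure_union_le _ _) ?_)
    rw [Real.volume_Icc, Real.volume_Icc,
      show θ + c - θ = c by ring, show θ + 2 * π - (θ + 2 * π - c) = c by ring,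
      ← ENNReal.ofReal_add hc0 hc0]
    exact ENNReal.ofReal_le_ofReal (by linarith)
  have htarget : {x : ℝ | x ∈ Set.Icc 0 (2 * π) ∧ |Real.sin (θ - x)| ≤ s ∧ 0 ≤ Real.cos (θ - x)}
      ⊆ (A ∩ Set.Ioc 0 (0 + 2 * π)) ∪ {0} := by
    rintro x ⟨⟨hx0, hx2π⟩, hP⟩
    rcases eq_or_lt_of_le hx0 with h | h
    · right; simp [← h]
    · left; exact ⟨hP, h, by linarith⟩
  calc volume {x : ℝ | x ∈ Set.Icc 0 (2 * π) ∧ |Real.sin (θ - x)| ≤ s ∧ 0 ≤ Real.cos (θ - x)}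
      ≤ volume (A ∩ Set.Ioc 0 (0 + 2 * π)) + volume ({0} : Set ℝ) :=
        le_trans (measure_mono htarget) (measure_union_le _ _)
    _ = volume (A ∩ Set.Ioc θ (θ + 2 * π)) := by rw [hfund, Real.volume_singleton, add_zero]
    _ ≤ ENNReal.ofReal (2 * c) := hmain

/-- analog of Theorem 3(ii): Let `ρ' > 0`, `Δ > 2ρ'`, let
`z_1, …, z_N ∈ ℂ` have pairwise distances `≥ Δ`, and let `w ∈ ℂ` be fixed. Then the set
of angles `β ∈ [0, 2π]` for which the line `{w + t·e^{iβ} : t ∈ ℝ}` meets at least two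
of the closed discs `D(z_i, ρ')` has Lebesgue measure at most
`2·N·(N − 1)·arcsin(2ρ'/Δ)`. -/
theorem measure_angles_hitting_two_discs (ρ' Δ : ℝ) (hρ : 0 < ρ') (hΔ : 2 * ρ' < Δ)
    (N : ℕ) (zs : Fin N → ℂ) (hzs : ∀ i j, i ≠ j → Δ ≤ ‖zs i - zs j‖)
    (w : ℂ) :
    volume {β : ℝ | β ∈ Set.Icc 0 (2 * π) ∧
        ∃ i j : Fin N, i ≠ j ∧
          (∃ t : ℝ, w + (t : ℂ) * Complex.exp (β * Complex.I) ∈ Metric.closedBall (zs i) ρ') ∧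
          (∃ t : ℝ, w + (t : ℂ) * Complex.exp (β * Complex.I) ∈ Metric.closedBall (zs j) ρ')}
      ≤ ENNReal.ofReal (2 * N * ((N : ℝ) - 1) * Real.arcsin (2 * ρ' / Δ)) := by
  have hπ := Real.pi_pos
  have hΔ0 : 0 < Δ := by linarith
  set s : ℝ := 2 * ρ' / Δ with hs_def
  have hs0 : 0 < s := by positivity
  have hs1 : s < 1 := (div_lt_one hΔ0).mpr hΔ
  set c : ℝ := Real.arcsin s with hc_def
  have hc0 : 0 ≤ c := Real.arcsin_nonneg.mpr hs0.le
  have hcπ : c < π / 2 := Real.arcsin_lt_pi_div_two.mpr hs1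
  have hsc : Real.sin c = s := Real.sin_arcsin (by linarith) hs1.le
  set T : Fin N → Fin N → Set ℝ := fun i j =>
    {β : ℝ | i ≠ j ∧ β ∈ Set.Icc 0 (2 * π) ∧
      |Real.sin (Complex.arg (zs j - zs i) - β)| ≤ s ∧
      0 ≤ Real.cos (Complex.arg (zs j - zs i) - β)} with hT_def
  have key : ∀ i j : Fin N, i ≠ j → ∀ β : ℝ,
      (∃ t : ℝ, ‖w + (t : ℂ) * Complex.exp (β * Complex.I) - zs i‖ ≤ ρ') →
      (∃ t : ℝ, ‖w + (t : ℂ) * Complex.exp (β * Complex.I) - zs j‖ ≤ ρ') →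
      0 ≤ ((zs j - zs i) * Complex.exp (-(β : ℂ) * Complex.I)).re →
      |Real.sin (Complex.arg (zs j - zs i) - β)| ≤ s ∧
      0 ≤ Real.cos (Complex.arg (zs j - zs i) - β) := by
    rintro i j hij β ⟨t, ht⟩ ⟨t', ht'⟩ hre
    set u : ℂ := zs j - zs i with hu_def
    set E : ℂ := Complex.exp ((β : ℂ) * Complex.I) with hE_def
    set F : ℂ := Complex.exp (-(β : ℂ) * Complex.I) with hF_def
    have hEF : E * F = 1 := by
      rw [hE_def, hF_def, ← Complex.exp_add, show (β : ℂ) * Complex.I + -(β : ℂ) * Complex.I = 0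
        by ring, Complex.exp_zero]
    have hr : Δ ≤ ‖u‖ := hzs j i hij.symm
    have hru : 0 < ‖u‖ := lt_of_lt_of_le hΔ0 hr
    have hdiff : ‖u - ((t' - t : ℝ) : ℂ) * E‖ ≤ 2 * ρ' := by
      have heq : u - ((t' - t : ℝ) : ℂ) * E
          = (w + (t : ℂ) * E - zs i) - (w + (t' : ℂ) * E - zs j) := by
        rw [hu_def]; push_cast; ring
      rw [heq]
      refine le_trans (norm_sub_le _ _) ?_
      linarith
    have habsF : ‖F‖ = 1 := by
      rw [hF_def, show -(β : ℂ) * Complex.I = ((-β : ℝ) : ℂ) * Complex.I by push_cast; ring]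
      exact Complex.norm_exp_ofReal_mul_I _
    have him0 : (u * F).im = ((u - ((t' - t : ℝ) : ℂ) * E) * F).im := by
      have h1 : (u - ((t' - t : ℝ) : ℂ) * E) * F
          = u * F - ((t' - t : ℝ) : ℂ) * (E * F) := by ring
      rw [h1, hEF, mul_one, Complex.sub_im, Complex.ofReal_im, sub_zero]
    have him : |(u * F).im| ≤ 2 * ρ' := by
      rw [him0]
      refine le_trans (Complex.abs_im_le_norm _) ?_
      rw [norm_mul, habsF, mul_one]
      exact hdiff
    have hpolar : u * F = ((‖u‖ : ℝ) : ℂ)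
        * Complex.exp (((Complex.arg u - β : ℝ) : ℂ) * Complex.I) := by
      conv_lhs => rw [← Complex.norm_mul_exp_arg_mul_I u]
      rw [hF_def, mul_assoc, ← Complex.exp_add,
        show (Complex.arg u : ℂ) * Complex.I + -(β : ℂ) * Complex.I
          = ((Complex.arg u - β : ℝ) : ℂ) * Complex.I by push_cast; ring]
    have him2 : (u * F).im = ‖u‖ * Real.sin (Complex.arg u - β) := by
      rw [hpolar, Complex.im_ofReal_mul, Complex.exp_ofReal_mul_I_im]
    have hre2 : (u * F).re = ‖u‖ * Real.cos (Complex.arg u - β) := by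
      rw [hpolar, Complex.re_ofReal_mul, Complex.exp_ofReal_mul_I_re]
    constructor
    · have h1 : ‖u‖ * |Real.sin (Complex.arg u - β)| ≤ 2 * ρ' := by
        rw [← abs_of_nonneg hru.le, ← abs_mul, ← him2]
        exact him
      rw [hs_def, le_div_iff₀ hΔ0]
      calc |Real.sin (Complex.arg u - β)| * Δ
          ≤ |Real.sin (Complex.arg u - β)| * ‖u‖ := by
            exact mul_le_mul_of_nonneg_left hr (abs_nonneg _)
        _ = ‖u‖ * |Real.sin (Complex.arg u - β)| := mul_comm _ _
        _ ≤ 2 * ρ' := h1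
    · rw [hre2] at hre
      by_contra h
      push_neg at h
      nlinarith
  have hcover : {β : ℝ | β ∈ Set.Icc 0 (2 * π) ∧
        ∃ i j : Fin N, i ≠ j ∧
          (∃ t : ℝ, w + (t : ℂ) * Complex.exp (β * Complex.I) ∈ Metric.closedBall (zs i) ρ') ∧
          (∃ t : ℝ, w + (t : ℂ) * Complex.exp (β * Complex.I) ∈ Metric.closedBall (zs j) ρ')}
      ⊆ ⋃ i, ⋃ j, T i j := by
    rintro β ⟨hβ, i, j, hij, ⟨t, ht⟩, ⟨t', ht'⟩⟩
    rw [Metric.mem_closedBall, Complex.dist_eq] at ht ht'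
    rcases le_total 0 ((zs j - zs i) * Complex.exp (-(β : ℂ) * Complex.I)).re with h | h
    · refine Set.mem_iUnion.mpr ⟨i, Set.mem_iUnion.mpr ⟨j, ?_⟩⟩
      exact ⟨hij, hβ, key i j hij β ⟨t, ht⟩ ⟨t', ht'⟩ h⟩
    · refine Set.mem_iUnion.mpr ⟨j, Set.mem_iUnion.mpr ⟨i, ?_⟩⟩
      have h' : 0 ≤ ((zs i - zs j) * Complex.exp (-(β : ℂ) * Complex.I)).re := by
        rw [show (zs i - zs j) * Complex.exp (-(β : ℂ) * Complex.I)
          = -((zs j - zs i) * Complex.exp (-(β : ℂ) * Complex.I)) by ring, Complex.neg_re]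
        linarith
      exact ⟨hij.symm, hβ, key j i hij.symm β ⟨t', ht'⟩ ⟨t, ht⟩ h'⟩
  have hTbound : ∀ i j : Fin N, volume (T i j)
      ≤ if i = j then 0 else ENNReal.ofReal (2 * c) := by
    intro i j
    by_cases h : i = j
    · subst h
      have hempty : T i i = ∅ := by
        ext β; simp [hT_def]
      simp [hempty]
    · simp only [h, if_false]
      refine le_trans (measure_mono ?_)
        (cover_measure (Complex.arg (zs j - zs i)) s c hc0 hcπ hsc)
      rintro β ⟨_, hβ, hP⟩
      exact ⟨hβ, hP⟩
  calc volume {β : ℝ | β ∈ Set.Icc 0 (2 * π) ∧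
        ∃ i j : Fin N, i ≠ j ∧
          (∃ t : ℝ, w + (t : ℂ) * Complex.exp (β * Complex.I) ∈ Metric.closedBall (zs i) ρ') ∧
          (∃ t : ℝ, w + (t : ℂ) * Complex.exp (β * Complex.I) ∈ Metric.closedBall (zs j) ρ')}
      ≤ volume (⋃ i, ⋃ j, T i j) := measure_mono hcover
    _ ≤ ∑' i : Fin N, volume (⋃ j, T i j) := measure_iUnion_le _
    _ ≤ ∑' i : Fin N, ∑' j : Fin N, volume (T i j) :=
        ENNReal.tsum_le_tsum fun i => measure_iUnion_le _
    _ = ∑ i : Fin N, ∑ j : Fin N, volume (T i j) := by simp [tsum_fintype]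
    _ ≤ ∑ i : Fin N, ∑ j : Fin N, (if i = j then 0 else ENNReal.ofReal (2 * c)) := by
        refine Finset.sum_le_sum fun i _ => Finset.sum_le_sum fun j _ => hTbound i j
    _ = ∑ i : Fin N, ((N - 1 : ℕ) : ℝ≥0∞) * ENNReal.ofReal (2 * c) := by
        refine Finset.sum_congr rfl fun i _ => ?_
        rw [Finset.sum_ite, Finset.sum_const_zero, zero_add, Finset.sum_const, nsmul_eq_mul]
        congr 2
        have hfe : Finset.univ.filter (fun j => ¬ i = j) = Finset.univ.erase i := by
          ext x; simp [Finset.mem_erase, ne_comm, eq_comm, Ne]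
        rw [hfe, Finset.card_erase_of_mem (Finset.mem_univ i), Finset.card_univ,
          Fintype.card_fin]
    _ = (N : ℝ≥0∞) * (((N - 1 : ℕ) : ℝ≥0∞) * ENNReal.ofReal (2 * c)) := by
        rw [Finset.sum_const, Finset.card_univ, Fintype.card_fin, nsmul_eq_mul]
    _ ≤ ENNReal.ofReal (2 * N * ((N : ℝ) - 1) * c) := by
        rcases Nat.eq_zero_or_pos N with hN | hN
        · subst hN; simp
        · have hcast : ((N - 1 : ℕ) : ℝ) = (N : ℝ) - 1 := by
            rw [Nat.cast_sub hN, Nat.cast_one]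
          rw [← ENNReal.ofReal_natCast N, ← ENNReal.ofReal_natCast (N - 1),
            ← ENNReal.ofReal_mul (Nat.cast_nonneg _), ← ENNReal.ofReal_mul (Nat.cast_nonneg _)]
          refine ENNReal.ofReal_le_ofReal (le_of_eq ?_)
          rw [hcast]; ring
end

section
/- (Probability form of Theorem 3(ii)-(iii).) Let ρ > 0 and Δ ≥ 2√2·ρ, let z_1, …, z_N ∈ ℂ have pairwise distances |z_i − z_j| ≥ Δ for i ≠ j, let w ∈ ℂ be fixed, and let β be chosen uniformly at random in [0, 2π]. Then the probability that the line {w + t·e^{iβ} : t ∈ ℝ} intersects at least two of the closed discs D(z_i, √2·ρ), i = 1, …, N, is at most √2·N·(N − 1)·ρ/Δ. In particular, if √2·N·(N−1)·ρ/Δ ≤ ε then with probability at least 1 − ε the random line intersects at most one of the N discs. -/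
open MeasureTheory Real

/-- The line `w + t e^{iβ}` meets the closed ball `D(z,r)` iff the imaginary part of
`e^{-iβ}(z - w)` is at most `r` in absolute value. -/
lemma hit_line_iff (w z : ℂ) (β r : ℝ) :
    (∃ t : ℝ, w + (t : ℂ) * Complex.exp (β * Complex.I) ∈ Metric.closedBall z r)
    ↔ |(Complex.exp (-(β : ℂ) * Complex.I) * (z - w)).im| ≤ r := by
  have hmul : Complex.exp (-(β:ℂ) * Complex.I) * Complex.exp ((β:ℂ) * Complex.I) = 1 := by
    rw [← Complex.exp_add, neg_mul, neg_add_cancel, Complex.exp_zero]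
  have habs1 : ‖Complex.exp (-(β:ℂ) * Complex.I)‖ = 1 := by
    have := Complex.norm_exp_ofReal_mul_I (-β)
    simpa using this
  set ζ : ℂ := Complex.exp (-(β:ℂ) * Complex.I) * (z - w) with hζ
  have key : ∀ t : ℝ, ‖w + (t:ℂ) * Complex.exp (β * Complex.I) - z‖
      = ‖(t : ℂ) - ζ‖ := by
    intro t
    calc ‖w + (t:ℂ) * Complex.exp (β * Complex.I) - z‖
        = ‖Complex.exp (-(β:ℂ) * Complex.I)‖ *
          ‖w + (t:ℂ) * Complex.exp (β * Complex.I) - z‖ := by rw [habs1, one_mul]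
      _ = ‖Complex.exp (-(β:ℂ) * Complex.I) *
          (w + (t:ℂ) * Complex.exp (β * Complex.I) - z)‖ := (norm_mul _ _).symm
      _ = ‖(t : ℂ) - ζ‖ := by
          congr 1
          rw [hζ]
          linear_combination (t : ℂ) * hmul
  constructor
  · rintro ⟨t, ht⟩
    rw [Metric.mem_closedBall, Complex.dist_eq, key t] at ht
    have h1 : |((t:ℂ) - ζ).im| ≤ ‖(t:ℂ) - ζ‖ := Complex.abs_im_le_norm _
    have h2 : ((t:ℂ) - ζ).im = -ζ.im := by simp
    rw [h2, abs_neg] at h1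
    exact h1.trans ht
  · intro h
    refine ⟨ζ.re, ?_⟩
    rw [Metric.mem_closedBall, Complex.dist_eq, key ζ.re]
    have h2 : ((ζ.re : ℂ) - ζ) = ((-ζ.im : ℝ) : ℂ) * Complex.I := by
      apply Complex.ext <;> simp
    rw [h2, norm_mul, Complex.norm_I, mul_one, Complex.norm_real, Real.norm_eq_abs, abs_neg]
    exact h

/-- Jordan-type covering: on `(0, 2π]` the set where `|sin| ≤ s` is covered by three
intervals of total length `2πs`. -/
lemma sin_band_cover (s : ℝ) (h0 : 0 ≤ s) (h1 : s ≤ 1) :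
    {x : ℝ | |Real.sin x| ≤ s} ∩ Set.Ioc 0 (0 + 2 * π) ⊆
      Set.Icc 0 (π / 2 * s) ∪ Set.Icc (π - π / 2 * s) (π + π / 2 * s) ∪
        Set.Icc (2 * π - π / 2 * s) (2 * π) := by
  set c : ℝ := π / 2 * s with hc
  have hc0 : 0 ≤ c := by positivity
  have hcle : c ≤ π / 2 := by
    rw [hc]
    nlinarith [pi_pos]
  have hsc : s ≤ Real.sin c := by
    have h := Real.mul_le_sin (x := c) hc0 hcle
    have : 2 / π * c = s := by
      rw [hc]; field_simp
    linarith [this ▸ h]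
  -- key: on (c, π - c), sin > s
  have key : ∀ y : ℝ, c < y → y < π - c → s < Real.sin y := by
    intro y hy1 hy2
    rcases le_or_gt y (π / 2) with hy | hy
    · have : Real.sin c < Real.sin y := by
        apply Real.strictMonoOn_sin ⟨by linarith [pi_pos], hcle⟩ ⟨by linarith [pi_pos], hy⟩ hy1
      linarith
    · have h3 : Real.sin y = Real.sin (π - y) := (Real.sin_pi_sub y).symm
      have : Real.sin c < Real.sin (π - y) := by
        apply Real.strictMonoOn_sin ⟨by linarith [pi_pos], hcle⟩ ⟨by linarith [pi_pos], by linarith⟩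
        linarith
      linarith [h3]
  rintro x ⟨hxs, hx0, hx2π⟩
  simp only [Set.mem_setOf_eq] at hxs
  rw [zero_add] at hx2π
  by_contra hcon
  simp only [Set.mem_union, Set.mem_Icc, not_or, not_and_or, not_le] at hcon
  obtain ⟨⟨h1', h2'⟩, h3'⟩ := hcon
  have hcx : c < x := h1'.resolve_left (not_lt.mpr hx0.le)
  have hx2 : x < 2 * π - c := h3'.resolve_right (not_lt.mpr hx2π)
  rcases h2' with h | h
  · -- x < π - c, so c < x < π - c
    have := key x hcx h
    have : Real.sin x ≤ |Real.sin x| := le_abs_self _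
    linarith [key x hcx h, hxs, le_abs_self (Real.sin x)]
  · -- π + c < x
    have hy1 : c < x - π := by linarith
    have hy2 : x - π < π - c := by linarith
    have hk := key (x - π) hy1 hy2
    have hsinx : Real.sin x = -Real.sin (x - π) := by
      have h' := Real.sin_add_pi (x - π)
      rw [show x - π + π = x by ring] at h'
      exact h'
    have : |Real.sin x| = |Real.sin (x - π)| := by rw [hsinx, abs_neg]
    rw [this] at hxs
    linarith [le_abs_self (Real.sin (x - π))]

/-- Measure of the set of angles in `[0,2π]` where `|sin (β - θ)| ≤ s` is at most `2πs`. -/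
lemma band_measure (s θ : ℝ) (h0 : 0 ≤ s) (h1 : s ≤ 1) :
    volume {β : ℝ | β ∈ Set.Icc 0 (2 * π) ∧ |Real.sin (β - θ)| ≤ s}
      ≤ ENNReal.ofReal (2 * π * s) := by
  set S : Set ℝ := {x : ℝ | |Real.sin x| ≤ s} with hSdef
  have hS : MeasurableSet S :=
    measurableSet_le (continuous_abs.comp Real.continuous_sin).measurable measurable_const
  -- translate
  have hset : {β : ℝ | β ∈ Set.Icc 0 (2 * π) ∧ |Real.sin (β - θ)| ≤ s}
      = (fun x => x + (-θ)) ⁻¹' (S ∩ Set.Icc (-θ) (2 * π - θ)) := by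
    ext β
    simp only [Set.mem_setOf_eq, Set.mem_preimage, Set.mem_inter_iff, Set.mem_Icc, hSdef]
    constructor
    · rintro ⟨⟨hb1, hb2⟩, hb3⟩
      refine ⟨by simpa [sub_eq_add_neg] using hb3, by linarith, by linarith⟩
    · rintro ⟨hb3, hb1, hb2⟩
      refine ⟨⟨by linarith, by linarith⟩, by simpa [sub_eq_add_neg] using hb3⟩
  rw [hset, measure_preimage_add_right]
  -- compare with Ioc
  have hsub : S ∩ Set.Icc (-θ) (2 * π - θ) ⊆ (S ∩ Set.Ioc (-θ) (-θ + 2 * π)) ∪ {-θ} := by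
    rintro x ⟨hx1, hx2, hx3⟩
    rcases eq_or_lt_of_le hx2 with h | h
    · right; simp [← h]
    · left; exact ⟨hx1, h, by linarith⟩
  have h2 : volume (S ∩ Set.Icc (-θ) (2 * π - θ)) ≤ volume (S ∩ Set.Ioc (-θ) (-θ + 2 * π)) := by
    calc volume (S ∩ Set.Icc (-θ) (2 * π - θ))
        ≤ volume ((S ∩ Set.Ioc (-θ) (-θ + 2 * π)) ∪ {-θ}) := measure_mono hsub
      _ ≤ volume (S ∩ Set.Ioc (-θ) (-θ + 2 * π)) + volume ({-θ} : Set ℝ) := measure_union_le _ _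
      _ = volume (S ∩ Set.Ioc (-θ) (-θ + 2 * π)) := by rw [Real.volume_singleton, add_zero]
  refine h2.trans ?_
  -- use fundamental domain to shift to 0
  have hπ : (0 : ℝ) < 2 * π := by positivity
  haveI : VAddInvariantMeasure (AddSubgroup.zmultiples (2 * π)) ℝ volume :=
    ⟨fun c s _ => measure_preimage_add _ _ _⟩
  have hfd1 := isAddFundamentalDomain_Ioc hπ (-θ) (volume : Measure ℝ)
  have hfd2 := isAddFundamentalDomain_Ioc hπ 0 (volume : Measure ℝ)
  have hinv : ∀ g : AddSubgroup.zmultiples (2 * π), (fun x : ℝ => g +ᵥ x) ⁻¹' S = S := by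
    rintro ⟨g, hg⟩
    obtain ⟨k, hk⟩ := hg
    ext x
    simp only [Set.mem_preimage, hSdef, Set.mem_setOf_eq]
    have : Real.sin ((⟨g, ⟨k, hk⟩⟩ : AddSubgroup.zmultiples (2*π)) +ᵥ x) = Real.sin x := by
      have hper := (Real.sin_periodic.int_mul k) x
      have hgx : (⟨g, ⟨k, hk⟩⟩ : AddSubgroup.zmultiples (2*π)) +ᵥ x = x + (k : ℝ) * (2 * π) := by
        show g + x = x + (k : ℝ) * (2 * π)
        rw [← hk]
        push_cast [zsmul_eq_mul]
        ring
      rw [hgx, hper]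
    rw [this]
  have h3 : volume (S ∩ Set.Ioc (-θ) (-θ + 2 * π)) = volume (S ∩ Set.Ioc 0 (0 + 2 * π)) :=
    hfd1.measure_set_eq hfd2 hS hinv
  rw [h3]
  -- cover by three intervals
  have hcover := sin_band_cover s h0 h1
  set c : ℝ := π / 2 * s with hc
  have hc0 : 0 ≤ c := by positivity
  calc volume (S ∩ Set.Ioc 0 (0 + 2 * π))
      ≤ volume (Set.Icc 0 c ∪ Set.Icc (π - c) (π + c) ∪ Set.Icc (2 * π - c) (2 * π)) :=
        measure_mono hcover
    _ ≤ volume (Set.Icc 0 c ∪ Set.Icc (π - c) (π + c)) + volume (Set.Icc (2 * π - c) (2 * π)) :=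
        measure_union_le _ _
    _ ≤ volume (Set.Icc 0 c) + volume (Set.Icc (π - c) (π + c)) +
          volume (Set.Icc (2 * π - c) (2 * π)) := by
        gcongr
        exact measure_union_le _ _
    _ = ENNReal.ofReal (c - 0) + ENNReal.ofReal (π + c - (π - c)) +
          ENNReal.ofReal (2 * π - (2 * π - c)) := by
        rw [Real.volume_Icc, Real.volume_Icc, Real.volume_Icc]
    _ = ENNReal.ofReal c + ENNReal.ofReal (2 * c) + ENNReal.ofReal c := by
        rw [show (c - 0 : ℝ) = c by ring, show (π + c - (π - c) : ℝ) = 2 * c by ring,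
          show (2 * π - (2 * π - c) : ℝ) = c by ring]
    _ = ENNReal.ofReal (2 * π * s) := by
        rw [← ENNReal.ofReal_add hc0 (by linarith), ← ENNReal.ofReal_add (by linarith) hc0]
        congr 1
        rw [hc]; ring

-- geometric pair lemma
lemma pair_sin_bound (ρ Δ : ℝ) (hρ : 0 < ρ) (hΔ : 2 * Real.sqrt 2 * ρ ≤ Δ)
    (N : ℕ) (zs : Fin N → ℂ) (hzs : ∀ i j, i ≠ j → Δ ≤ ‖zs i - zs j‖) (w : ℂ)
    (β : ℝ) (i j : Fin N) (hij : i ≠ j)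
    (hi : |(Complex.exp (-(β : ℂ) * Complex.I) * (zs i - w)).im| ≤ Real.sqrt 2 * ρ)
    (hj : |(Complex.exp (-(β : ℂ) * Complex.I) * (zs j - w)).im| ≤ Real.sqrt 2 * ρ) :
    |Real.sin (β - Complex.arg (zs j - zs i))| ≤ 2 * (Real.sqrt 2 * ρ) / Δ := by
  have hΔ0 : (0 : ℝ) < Δ := lt_of_lt_of_le (by positivity) hΔ
  set u : ℂ := Complex.exp (-(β : ℂ) * Complex.I) with hu
  set d : ℝ := ‖zs j - zs i‖ with hd
  set θ : ℝ := Complex.arg (zs j - zs i) with hθ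
  have hdΔ : Δ ≤ d := hzs j i (Ne.symm hij)
  have hd0 : (0 : ℝ) < d := lt_of_lt_of_le hΔ0 hdΔ
  have him : |(u * (zs j - zs i)).im| ≤ 2 * (Real.sqrt 2 * ρ) := by
    have hsplit : u * (zs j - zs i) = u * (zs j - w) - u * (zs i - w) := by ring
    have him' : (u * (zs j - zs i)).im = (u * (zs j - w)).im - (u * (zs i - w)).im := by
      rw [hsplit, Complex.sub_im]
    rw [him']
    have habs := abs_sub (a := (u * (zs j - w)).im) (b := (u * (zs i - w)).im)
    calc |(u * (zs j - w)).im - (u * (zs i - w)).im|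
        ≤ |(u * (zs j - w)).im| + |(u * (zs i - w)).im| := abs_sub _ _
      _ ≤ 2 * (Real.sqrt 2 * ρ) := by linarith
  have hpolar : zs j - zs i = (d : ℂ) * Complex.exp ((θ : ℂ) * Complex.I) :=
    (Complex.norm_mul_exp_arg_mul_I _).symm
  have hexpmul : Complex.exp (-(β : ℂ) * Complex.I) * Complex.exp ((θ : ℂ) * Complex.I)
      = Complex.exp (((θ - β : ℝ) : ℂ) * Complex.I) := by
    rw [← Complex.exp_add]
    congr 1
    push_cast
    ring
  have him2 : (u * (zs j - zs i)).im = d * Real.sin (θ - β) := by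
    rw [hpolar, hu]
    have : Complex.exp (-(β : ℂ) * Complex.I) * ((d : ℂ) * Complex.exp ((θ : ℂ) * Complex.I))
        = (d : ℂ) * Complex.exp (((θ - β : ℝ) : ℂ) * Complex.I) := by
      linear_combination (d : ℂ) * hexpmul
    rw [this, Complex.mul_im, Complex.ofReal_re, Complex.ofReal_im,
      Complex.exp_ofReal_mul_I_im]
    ring
  rw [him2] at him
  have h5 : d * |Real.sin (θ - β)| ≤ 2 * (Real.sqrt 2 * ρ) := by
    rwa [abs_mul, abs_of_pos hd0] at him
  have h6 : |Real.sin (β - θ)| = |Real.sin (θ - β)| := by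
    rw [show β - θ = -(θ - β) by ring, Real.sin_neg, abs_neg]
  rw [h6, le_div_iff₀ hΔ0]
  nlinarith [abs_nonneg (Real.sin (θ - β))]

lemma card_lt_pairs (N : ℕ) :
    (Finset.univ.filter fun p : Fin N × Fin N => p.1 < p.2).card
      + (Finset.univ.filter fun p : Fin N × Fin N => p.1 < p.2).card ≤ N * N - N := by
  set P := Finset.univ.filter fun p : Fin N × Fin N => p.1 < p.2 with hP
  set Q := Finset.univ.filter fun p : Fin N × Fin N => p.2 < p.1 with hQ
  have himg : P.image Prod.swap = Q := by
    ext p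
    simp only [Finset.mem_image, Finset.mem_filter, Finset.mem_univ, true_and, hP, hQ]
    constructor
    · rintro ⟨⟨a, b⟩, hab, rfl⟩
      exact hab
    · intro h
      exact ⟨(p.2, p.1), h, by simp⟩
  have hcard2 : Q.card = P.card := by rw [← himg]; exact Finset.card_image_of_injective _ Prod.swap_injective
  have hdisj : Disjoint P Q := by
    rw [Finset.disjoint_left]
    intro p hp hq
    simp only [hP, hQ, Finset.mem_filter] at hp hq
    exact absurd hq.2 (lt_asymm hp.2)
  have hsub : P ∪ Q ⊆ Finset.univ.offDiag := by
    intro p hp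
    rw [Finset.mem_union] at hp
    rw [Finset.mem_offDiag]
    refine ⟨Finset.mem_univ _, Finset.mem_univ _, ?_⟩
    rcases hp with h | h <;> simp only [hP, hQ, Finset.mem_filter] at h
    · exact ne_of_lt h.2
    · exact ne_of_gt h.2
  calc P.card + P.card = P.card + Q.card := by rw [hcard2]
    _ = (P ∪ Q).card := (Finset.card_union_of_disjoint hdisj).symm
    _ ≤ (Finset.univ : Finset (Fin N)).offDiag.card := Finset.card_le_card hsub
    _ = N * N - N := by rw [Finset.offDiag_card, Finset.card_univ, Fintype.card_fin]

/-- probability form of Theorem 3(ii)-(iii): Let `ρ > 0`,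
`Δ ≥ 2√2·ρ`, let `z_1, …, z_N ∈ ℂ` have pairwise distances `≥ Δ`, let `w ∈ ℂ` be fixed,
and let `β` be uniform in `[0, 2π]`. Then the probability that the line
`{w + t·e^{iβ} : t ∈ ℝ}` meets at least two of the closed discs `D(z_i, √2·ρ)` is at most
`√2·N·(N − 1)·ρ/Δ`; in particular, if `√2·N·(N−1)·ρ/Δ ≤ ε` then with probability at
least `1 − ε` the random line meets at most one of the `N` discs. -/
theorem prob_angles_hitting_two_discs (ρ Δ : ℝ) (hρ : 0 < ρ)
    (hΔ : 2 * Real.sqrt 2 * ρ ≤ Δ)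
    (N : ℕ) (zs : Fin N → ℂ) (hzs : ∀ i j, i ≠ j → Δ ≤ ‖zs i - zs j‖)
    (w : ℂ) :
    (volume {β : ℝ | β ∈ Set.Icc 0 (2 * π) ∧
        ∃ i j : Fin N, i ≠ j ∧
          (∃ t : ℝ, w + (t : ℂ) * Complex.exp (β * Complex.I) ∈
            Metric.closedBall (zs i) (Real.sqrt 2 * ρ)) ∧
          (∃ t : ℝ, w + (t : ℂ) * Complex.exp (β * Complex.I) ∈
            Metric.closedBall (zs j) (Real.sqrt 2 * ρ))}).toReal / (2 * π)
      ≤ Real.sqrt 2 * N * ((N : ℝ) - 1) * ρ / Δ ∧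
    ∀ ε : ℝ, Real.sqrt 2 * N * ((N : ℝ) - 1) * ρ / Δ ≤ ε →
      1 - ε ≤
        (volume {β : ℝ | β ∈ Set.Icc 0 (2 * π) ∧
          ¬ ∃ i j : Fin N, i ≠ j ∧
            (∃ t : ℝ, w + (t : ℂ) * Complex.exp (β * Complex.I) ∈
              Metric.closedBall (zs i) (Real.sqrt 2 * ρ)) ∧
            (∃ t : ℝ, w + (t : ℂ) * Complex.exp (β * Complex.I) ∈
              Metric.closedBall (zs j) (Real.sqrt 2 * ρ))}).toReal / (2 * π) := by
  have hΔ0 : (0 : ℝ) < Δ := lt_of_lt_of_le (by positivity) hΔ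
  have h2π : (0 : ℝ) < 2 * π := by positivity
  set σ : ℝ := 2 * (Real.sqrt 2 * ρ) / Δ with hσ
  have hσ0 : 0 ≤ σ := by positivity
  have hσ1 : σ ≤ 1 := by
    rw [hσ, div_le_one hΔ0]
    linarith [hΔ]
  set B : ℝ := Real.sqrt 2 * N * ((N : ℝ) - 1) * ρ / Δ with hB
  have hB0 : 0 ≤ B := by
    rcases Nat.eq_zero_or_pos N with h | h
    · simp [hB, h]
    · have h1 : (1 : ℝ) ≤ N := by exact_mod_cast h
      apply div_nonneg _ hΔ0.le
      apply mul_nonneg (mul_nonneg (mul_nonneg (Real.sqrt_nonneg 2) (Nat.cast_nonneg N))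
        (by linarith)) hρ.le
  set Bad : Set ℝ := {β : ℝ | β ∈ Set.Icc 0 (2 * π) ∧
        ∃ i j : Fin N, i ≠ j ∧
          (∃ t : ℝ, w + (t : ℂ) * Complex.exp (β * Complex.I) ∈
            Metric.closedBall (zs i) (Real.sqrt 2 * ρ)) ∧
          (∃ t : ℝ, w + (t : ℂ) * Complex.exp (β * Complex.I) ∈
            Metric.closedBall (zs j) (Real.sqrt 2 * ρ))} with hBad
  set P : Finset (Fin N × Fin N) := Finset.univ.filter fun p : Fin N × Fin N => p.1 < p.2 with hP
  set T : Fin N × Fin N → Set ℝ := fun p =>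
    {β : ℝ | β ∈ Set.Icc 0 (2 * π) ∧ |Real.sin (β - Complex.arg (zs p.2 - zs p.1))| ≤ σ}
    with hT
  -- covering
  have hsubset : Bad ⊆ ⋃ p ∈ P, T p := by
    rintro β ⟨hβ, i, j, hij, hi, hj⟩
    rw [hit_line_iff] at hi hj
    rcases lt_or_gt_of_ne hij with h | h
    · refine Set.mem_iUnion₂.mpr ⟨(i, j), ?_, ?_⟩
      · simp [hP, h]
      · exact ⟨hβ, pair_sin_bound ρ Δ hρ hΔ N zs hzs w β i j hij hi hj⟩
    · refine Set.mem_iUnion₂.mpr ⟨(j, i), ?_, ?_⟩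
      · simp [hP, h]
      · exact ⟨hβ, pair_sin_bound ρ Δ hρ hΔ N zs hzs w β j i hij.symm hj hi⟩
  -- measure bound
  have hNN : N ≤ N * N := by
    rcases Nat.eq_zero_or_pos N with h | h
    · simp [h]
    · exact Nat.le_mul_of_pos_left N h
  have hcardR : (P.card : ℝ) + P.card ≤ (N : ℝ) * N - N := by
    calc (P.card : ℝ) + P.card = ((P.card + P.card : ℕ) : ℝ) := by push_cast; ring
      _ ≤ ((N * N - N : ℕ) : ℝ) := Nat.cast_le.mpr (card_lt_pairs N)
      _ = (N : ℝ) * N - N := by rw [Nat.cast_sub hNN]; push_cast; ring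
  have hvol : volume Bad ≤ ENNReal.ofReal (2 * π * B) := by
    calc volume Bad ≤ volume (⋃ p ∈ P, T p) := measure_mono hsubset
      _ ≤ ∑ p ∈ P, volume (T p) := measure_biUnion_finset_le P T
      _ ≤ ∑ _p ∈ P, ENNReal.ofReal (2 * π * σ) := by
          refine Finset.sum_le_sum fun p _ => ?_
          exact band_measure σ _ hσ0 hσ1
      _ = (P.card : ENNReal) * ENNReal.ofReal (2 * π * σ) := by
          rw [Finset.sum_const, nsmul_eq_mul]
      _ = ENNReal.ofReal ((P.card : ℝ) * (2 * π * σ)) := by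
          rw [← ENNReal.ofReal_natCast P.card,
            ← ENNReal.ofReal_mul (by positivity)]
      _ ≤ ENNReal.ofReal (2 * π * B) := by
          apply ENNReal.ofReal_le_ofReal
          calc (P.card : ℝ) * (2 * π * σ)
              = ((P.card : ℝ) + P.card) * (π * (Real.sqrt 2) * ρ) / Δ * 2 := by
                rw [hσ]; field_simp; ring
            _ ≤ ((N : ℝ) * N - N) * (π * (Real.sqrt 2) * ρ) / Δ * 2 := by
                gcongr
            _ = 2 * π * B := by rw [hB]; field_simp
  have htoReal : (volume Bad).toReal ≤ 2 * π * B :=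
    ENNReal.toReal_le_of_le_ofReal (by positivity) hvol
  have part1 : (volume Bad).toReal / (2 * π) ≤ B := by
    rw [div_le_iff₀ h2π]
    calc (volume Bad).toReal ≤ 2 * π * B := htoReal
      _ = B * (2 * π) := by ring
  refine ⟨part1, ?_⟩
  -- part 2
  intro ε hε
  set Good : Set ℝ := {β : ℝ | β ∈ Set.Icc 0 (2 * π) ∧
          ¬ ∃ i j : Fin N, i ≠ j ∧
            (∃ t : ℝ, w + (t : ℂ) * Complex.exp (β * Complex.I) ∈
              Metric.closedBall (zs i) (Real.sqrt 2 * ρ)) ∧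
            (∃ t : ℝ, w + (t : ℂ) * Complex.exp (β * Complex.I) ∈
              Metric.closedBall (zs j) (Real.sqrt 2 * ρ))} with hGood
  have hGeq : Good = Set.Icc 0 (2 * π) \ Bad := by
    ext β
    simp only [hGood, hBad, Set.mem_setOf_eq, Set.mem_diff]
    constructor
    · rintro ⟨h1, h2⟩
      exact ⟨h1, fun hb => h2 hb.2⟩
    · rintro ⟨h1, h2⟩
      exact ⟨h1, fun hx => h2 ⟨h1, hx⟩⟩
  have hmeasBad : MeasurableSet Bad := by
    have hrw : Bad = Set.Icc 0 (2 * π) ∩ ⋃ i, ⋃ j, ⋃ (_ : i ≠ j),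
        ({β : ℝ | |(Complex.exp (-(β : ℂ) * Complex.I) * (zs i - w)).im| ≤ Real.sqrt 2 * ρ} ∩
         {β : ℝ | |(Complex.exp (-(β : ℂ) * Complex.I) * (zs j - w)).im| ≤ Real.sqrt 2 * ρ}) := by
      ext β
      simp only [hBad, Set.mem_setOf_eq, Set.mem_inter_iff, Set.mem_iUnion, hit_line_iff]
      tauto
    rw [hrw]
    refine measurableSet_Icc.inter (MeasurableSet.iUnion fun i => MeasurableSet.iUnion fun j =>
      MeasurableSet.iUnion fun _ => ?_)
    have hm : ∀ k : Fin N,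
        Measurable fun β : ℝ => |(Complex.exp (-(β : ℂ) * Complex.I) * (zs k - w)).im| := by
      intro k
      have : Continuous fun β : ℝ =>
          |(Complex.exp (-(β : ℂ) * Complex.I) * (zs k - w)).im| := by
        apply Continuous.abs
        apply Complex.continuous_im.comp
        apply Continuous.mul _ continuous_const
        exact Complex.continuous_exp.comp ((Complex.continuous_ofReal.neg).mul continuous_const)
      exact this.measurable
    exact (measurableSet_le (hm i) measurable_const).inter
      (measurableSet_le (hm j) measurable_const)
  have hBadIcc : Bad ⊆ Set.Icc 0 (2 * π) := fun β hβ => hβ.1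
  have hIccVol : volume (Set.Icc (0 : ℝ) (2 * π)) = ENNReal.ofReal (2 * π) := by
    rw [Real.volume_Icc, sub_zero]
  have hfin : volume Bad ≠ ⊤ := by
    refine ne_top_of_le_ne_top ?_ (measure_mono hBadIcc)
    rw [hIccVol]
    exact ENNReal.ofReal_ne_top
  have hGvol : volume Good = volume (Set.Icc (0 : ℝ) (2 * π)) - volume Bad := by
    rw [hGeq]
    exact measure_diff hBadIcc hmeasBad.nullMeasurableSet hfin
  have hGtoReal : (volume Good).toReal = 2 * π - (volume Bad).toReal := by
    rw [hGvol, ENNReal.toReal_sub_of_le (measure_mono hBadIcc)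
      (by rw [hIccVol]; exact ENNReal.ofReal_ne_top), hIccVol,
      ENNReal.toReal_ofReal h2π.le]
  have hBadε : (volume Bad).toReal ≤ ε * (2 * π) := by
    rw [← div_le_iff₀ h2π]
    exact part1.trans hε
  rw [hGtoReal, le_div_iff₀ h2π]
  linarith
end
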